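/- Let H be a Hermitian matrix and v a unit vector such that H v = λ v + ε w for some λ∈ℝ, ε>0, and a unit vector w with w ⊥ v. Suppose H has exactly one eigenvalue λ_ε (counted with multiplicity) satisfying |λ − λ_ε| ≤ ε, and all other eigenvalues of H are at distance at least d>ε from λ. Then any unit eigenvector v_ε of H associated with λ_ε satisfies ‖ v_ε − Proj_v(v_ε) ‖ ≤ 2ε/(d − ε), where Proj_v denotes the orthogonal projection onto the span of v. -/

import Mathlib

open Matrix

open scoped InnerProductSpace ComplexConjugate

private lemma inner_symm_normSq {n : ℕ} (x : Fin n → ℂ) :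
    (inner ℂ ((WithLp.equiv 2 (Fin n → ℂ)).symm x) ((WithLp.equiv 2 (Fin n → ℂ)).symm x) : ℂ)
      = ((∑ i, Complex.normSq (x i) : ℝ) : ℂ) := by
  simp only [PiLp.inner_apply, RCLike.inner_apply, WithLp.equiv_symm_apply, PiLp.toLp_apply]
  push_cast
  refine Finset.sum_congr rfl fun i _ => ?_
  rw [Complex.normSq_eq_conj_mul_self, mul_comm]

set_option maxHeartbeats 800000

/-- **Proposition A.1 (2), Benaych-Georges and Péché**: if `H` is Hermitian, `v` a unit
vector with `H v = λ v + ε w` for a unit vector `w ⊥ v`, and `H` has exactly one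
eigenvalue `λ_ε` (counted with multiplicity) with `|λ - λ_ε| ≤ ε` while all other
eigenvalues are at distance at least `d > ε` from `λ`, then any unit eigenvector `v_ε`
of `H` associated with `λ_ε` satisfies `‖v_ε - Proj_v(v_ε)‖ ≤ 2ε/(d - ε)`. -/
theorem perturbation_eigenvector
    {n : ℕ} (H : Matrix (Fin n) (Fin n) ℂ) (hH : H.IsHermitian)
    (v w : Fin n → ℂ) (lam ε d : ℝ) (hε : 0 < ε) (hd : ε < d)
    (hv : ∑ i, Complex.normSq (v i) = 1)
    (hw : ∑ i, Complex.normSq (w i) = 1)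
    (horth : ∑ i, (starRingEnd ℂ) (w i) * v i = 0)
    (heq : H.mulVec v = (lam : ℂ) • v + (ε : ℂ) • w)
    -- exactly one eigenvalue (with multiplicity) within `ε` of `λ` …
    (i₀ : Fin n) (hclose : |lam - hH.eigenvalues i₀| ≤ ε)
    -- … and all others at distance at least `d` from `λ`
    (hfar : ∀ i : Fin n, i ≠ i₀ → d ≤ |lam - hH.eigenvalues i|)
    -- a unit eigenvector associated with `λ_ε`
    (vε : Fin n → ℂ)
    (hvε : ∑ i, Complex.normSq (vε i) = 1)
    (heig : H.mulVec vε = ((hH.eigenvalues i₀ : ℝ) : ℂ) • vε) :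
    Real.sqrt (∑ i, Complex.normSq
        (vε i - (∑ j, (starRingEnd ℂ) (v j) * vε j) * v i)) ≤
      2 * ε / (d - ε) := by
    classical
  have hd0 : 0 < d := hε.trans hd
  set μ : Fin n → ℝ := hH.eigenvalues with hμ
  set B := hH.eigenvectorBasis with hB
  set T := Matrix.toEuclideanLin H with hTdef
  set v' : EuclideanSpace ℂ (Fin n) := (WithLp.equiv 2 _).symm v with hv'
  set w' : EuclideanSpace ℂ (Fin n) := (WithLp.equiv 2 _).symm w with hw'
  set u' : EuclideanSpace ℂ (Fin n) := (WithLp.equiv 2 _).symm vε with hu'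
  have hsymm : T.IsSymmetric := Matrix.isHermitian_iff_isSymmetric.1 hH
  have hTB : ∀ i, T (B i) = (μ i : ℂ) • B i := by
    intro i
    have h := hH.mulVec_eigenvectorBasis i
    apply (WithLp.equiv 2 _).injective
    show H *ᵥ (WithLp.equiv 2 (Fin n → ℂ)) (B i) = _
    rw [show (WithLp.equiv 2 (Fin n → ℂ)) (B i) = ⇑(B i) from rfl, hB, h]
    funext j
    simp [hμ]
  have hTv : T v' = (lam : ℂ) • v' + (ε : ℂ) • w' := by
    show (WithLp.equiv 2 _).symm (H *ᵥ v) = _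
    rw [heq]; rfl
  have hTu : T u' = ((μ i₀ : ℝ) : ℂ) • u' := by
    show (WithLp.equiv 2 _).symm (H *ᵥ vε) = _
    rw [heig]; rfl
  set a : Fin n → ℂ := fun i => (inner ℂ (B i) v' : ℂ) with ha
  set b : Fin n → ℂ := fun i => (inner ℂ (B i) u' : ℂ) with hb
  set c : Fin n → ℂ := fun i => (inner ℂ (B i) w' : ℂ) with hc
  have key : ∀ (i : Fin n) (x : EuclideanSpace ℂ (Fin n)),
      (inner ℂ (B i) (T x) : ℂ) = (μ i : ℂ) * inner ℂ (B i) x := by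
    intro i x
    rw [← hsymm (B i) x, hTB i, inner_smul_left, Complex.conj_ofReal]
  -- eigenvalue separation
  have hμne : ∀ i : Fin n, i ≠ i₀ → μ i ≠ μ i₀ := by
    intro i hi hcontra
    have h1 := hfar i hi
    rw [hcontra] at h1
    linarith [hclose.trans_lt hd]
  -- coefficients of vε vanish away from i₀
  have hb0 : ∀ i : Fin n, i ≠ i₀ → b i = 0 := by
    intro i hi
    have h1 := key i u'
    rw [hTu, inner_smul_right] at h1
    have h2 : ((μ i : ℂ) - (μ i₀ : ℂ)) * b i = 0 := by
      rw [sub_mul, h1, hb]; ring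
    rcases mul_eq_zero.1 h2 with h3 | h3
    · exfalso
      apply hμne i hi
      exact_mod_cast sub_eq_zero.1 h3
    · exact h3
  -- equation for the coefficients of v
  have haeq : ∀ i : Fin n, ((μ i : ℂ) - (lam : ℂ)) * a i = (ε : ℂ) * c i := by
    intro i
    have h1 := key i v'
    rw [hTv, inner_add_right, inner_smul_right, inner_smul_right] at h1
    simp only [ha, hc]
    linear_combination -h1
  -- Parseval identities
  have hvv : (inner ℂ v' v' : ℂ) = 1 := by rw [hv', inner_symm_normSq, hv]; norm_num
  have hww : (inner ℂ w' w' : ℂ) = 1 := by rw [hw', inner_symm_normSq, hw]; norm_num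
  have huu : (inner ℂ u' u' : ℂ) = 1 := by rw [hu', inner_symm_normSq, hvε]; norm_num
  have parseval : ∀ (x : EuclideanSpace ℂ (Fin n)) (f : Fin n → ℂ),
      (∀ i, f i = inner ℂ (B i) x) →
      ∑ i, Complex.normSq (f i) = Complex.re (inner ℂ x x : ℂ) := by
    intro x f hf
    have h1 := B.sum_inner_mul_inner x x
    have h2 : ∀ i, (inner ℂ x (B i) : ℂ) * inner ℂ (B i) x = (Complex.normSq (f i) : ℂ) := by
      intro i
      rw [← inner_conj_symm x (B i), ← hf i, Complex.normSq_eq_conj_mul_self]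
    rw [Finset.sum_congr rfl fun i _ => h2 i] at h1
    have := congrArg Complex.re h1
    simpa using this
  have hPa : ∑ i, Complex.normSq (a i) = 1 := by
    rw [parseval v' a fun i => rfl, hvv]; simp
  have hPb : ∑ i, Complex.normSq (b i) = 1 := by
    rw [parseval u' b fun i => rfl, huu]; simp
  have hPc : ∑ i, Complex.normSq (c i) = 1 := by
    rw [parseval w' c fun i => rfl, hww]; simp
  -- |b i₀|² = 1
  have hbi₀ : Complex.normSq (b i₀) = 1 := by
    rw [← hPb, ← Finset.add_sum_erase _ _ (Finset.mem_univ i₀)]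
    rw [Finset.sum_eq_zero fun i hi => by
      rw [hb0 i (Finset.ne_of_mem_erase hi), Complex.normSq_zero]]
    ring
  -- bound on sum of |a i|² for i ≠ i₀
  have habound : ∀ i : Fin n, i ≠ i₀ →
      d ^ 2 * Complex.normSq (a i) ≤ ε ^ 2 * Complex.normSq (c i) := by
    intro i hi
    have h1 := congrArg Complex.normSq (haeq i)
    rw [Complex.normSq_mul, Complex.normSq_mul] at h1
    have h2 : Complex.normSq ((μ i : ℂ) - (lam : ℂ)) = (μ i - lam) ^ 2 := by
      rw [show ((μ i : ℂ) - (lam : ℂ)) = ((μ i - lam : ℝ) : ℂ) by push_cast; ring,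
        Complex.normSq_ofReal]; ring
    have h3 : Complex.normSq ((ε : ℝ) : ℂ) = ε ^ 2 := by
      rw [Complex.normSq_ofReal]; ring
    rw [h2, h3] at h1
    have h4 : d ^ 2 ≤ (μ i - lam) ^ 2 := by
      have h5 := hfar i hi
      have h6 := abs_nonneg (lam - μ i)
      nlinarith [sq_abs (lam - μ i)]
    nlinarith [Complex.normSq_nonneg (a i)]
  have hsum : d ^ 2 * ∑ i ∈ Finset.univ.erase i₀, Complex.normSq (a i) ≤ ε ^ 2 := by
    have h1 : d ^ 2 * ∑ i ∈ Finset.univ.erase i₀, Complex.normSq (a i)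
        ≤ ε ^ 2 * ∑ i ∈ Finset.univ.erase i₀, Complex.normSq (c i) := by
      rw [Finset.mul_sum, Finset.mul_sum]
      exact Finset.sum_le_sum fun i hi => habound i (Finset.ne_of_mem_erase hi)
    have h2 : ∑ i ∈ Finset.univ.erase i₀, Complex.normSq (c i) ≤ 1 := by
      rw [← hPc]
      exact Finset.sum_le_sum_of_subset_of_nonneg (Finset.erase_subset _ _)
        fun i _ _ => Complex.normSq_nonneg _
    nlinarith
  have hai₀ : 1 - ε ^ 2 / d ^ 2 ≤ Complex.normSq (a i₀) := by
    have h1 : Complex.normSq (a i₀) + ∑ i ∈ Finset.univ.erase i₀, Complex.normSq (a i) = 1 := by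
      rw [← Finset.add_sum_erase _ _ (Finset.mem_univ i₀)] at hPa; exact hPa
    have h2 : ∑ i ∈ Finset.univ.erase i₀, Complex.normSq (a i) ≤ ε ^ 2 / d ^ 2 := by
      rw [le_div_iff₀ (by positivity : (0:ℝ) < d ^ 2)]
      nlinarith
    linarith
  -- the inner product ⟪v', u'⟫
  set t : ℂ := (inner ℂ v' u' : ℂ) with ht
  have htval : t = conj (a i₀) * b i₀ := by
    rw [ht, ← B.sum_inner_mul_inner v' u']
    rw [Finset.sum_eq_single i₀]
    · rw [← inner_conj_symm v' (B i₀)]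
    · intro i _ hi
      rw [show (inner ℂ (B i) u' : ℂ) = b i from rfl, hb0 i hi, mul_zero]
    · intro h; exact absurd (Finset.mem_univ i₀) h
  have hnt : Complex.normSq t = Complex.normSq (a i₀) := by
    rw [htval, Complex.normSq_mul, Complex.normSq_conj, hbi₀, mul_one]
  -- rewrite the goal sum
  have htsum : (∑ j, (starRingEnd ℂ) (v j) * vε j) = t := by
    rw [ht]
    simp [PiLp.inner_apply, RCLike.inner_apply, hv', hu']
    exact Finset.sum_congr rfl fun j _ => mul_comm _ _
  have hgoal : (∑ i, Complex.normSq (vε i - t * v i)) = 1 - Complex.normSq t := by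
    have h1 : ((∑ i, Complex.normSq (vε i - t * v i) : ℝ) : ℂ)
        = (inner ℂ (u' - t • v') (u' - t • v') : ℂ) := by
      rw [show u' - t • v' = (WithLp.equiv 2 (Fin n → ℂ)).symm (fun i => vε i - t * v i)
        from rfl, inner_symm_normSq]
    rw [inner_sub_left, inner_sub_right, inner_sub_right, inner_smul_left, inner_smul_left,
      inner_smul_right, inner_smul_right, huu, hvv, ← ht,
      show (inner ℂ u' v' : ℂ) = conj t from (inner_conj_symm u' v').symm] at h1
    have h2 : ((∑ i, Complex.normSq (vε i - t * v i) : ℝ) : ℂ)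
        = ((1 - Complex.normSq t : ℝ) : ℂ) := by
      rw [h1, Complex.ofReal_sub, Complex.ofReal_one, Complex.normSq_eq_conj_mul_self]; ring
    exact_mod_cast h2
  rw [htsum, hgoal]
  -- final numeric bound
  have hfin : 1 - Complex.normSq t ≤ (2 * ε / (d - ε)) ^ 2 := by
    rw [hnt]
    have h1 : 1 - Complex.normSq (a i₀) ≤ ε ^ 2 / d ^ 2 := by linarith
    have h2 : ε ^ 2 / d ^ 2 ≤ (2 * ε / (d - ε)) ^ 2 := by
      have hde : (0:ℝ) < d - ε := by linarith
      rw [div_pow, div_le_div_iff₀ (by positivity) (by positivity)]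
      have h3 : (d - ε) ^ 2 ≤ 4 * d ^ 2 := by nlinarith
      have h4 := mul_le_mul_of_nonneg_left h3 (sq_nonneg ε)
      nlinarith [h4]
    linarith
  calc Real.sqrt (1 - Complex.normSq t) ≤ Real.sqrt ((2 * ε / (d - ε)) ^ 2) :=
        Real.sqrt_le_sqrt hfin
    _ = 2 * ε / (d - ε) := Real.sqrt_sq (by
        apply div_nonneg <;> linarith)
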